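/- The adoption-free equilibrium opinion vector lies in the unit cube: if x⁰ ∈ [0,1]^n, λ, ξ ∈ ℝ^n are nonnegative with λ_j + ξ_j ≤ 1 for all j, W̃ is nonnegative row-stochastic, and I − ΛW̃ is invertible with every complex eigenvalue of ΛW̃ of modulus strictly less than 1, then the vector x* := (I − ΛW̃)^{−1}(I − Λ − Ξ) x⁰ satisfies 0 ≤ x*_j ≤ 1 for all j. -/

import Mathlib

open Matrix

/-- Key lemma: for a substochastic-type matrix `A = Λ W̃`, if `(1 - A) *ᵥ y` is
componentwise nonnegative and `1 - A` is invertible, then `y` is nonnegative. -/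
lemma key_nonneg (n : ℕ)
    (Wt : Matrix (Fin n) (Fin n) ℝ)
    (hWt0 : ∀ i j, 0 ≤ Wt i j) (hWt1 : ∀ i, ∑ j, Wt i j = 1)
    (lam : Fin n → ℝ) (hlam : ∀ j, 0 ≤ lam j) (hlam1 : ∀ j, lam j ≤ 1)
    (hinv : IsUnit (1 - Matrix.diagonal lam * Wt))
    (y : Fin n → ℝ)
    (hc : ∀ j, 0 ≤ ((1 - Matrix.diagonal lam * Wt) *ᵥ y) j) :
    ∀ j, 0 ≤ y j := by
  classical
  by_contra hcon
  push_neg at hcon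
  obtain ⟨j₁, hj₁⟩ := hcon
  set M : Matrix (Fin n) (Fin n) ℝ := 1 - Matrix.diagonal lam * Wt with hM
  -- take the minimizer of y
  have hne : (Finset.univ : Finset (Fin n)).Nonempty := ⟨j₁, Finset.mem_univ _⟩
  obtain ⟨j₀, -, hj₀⟩ := Finset.exists_min_image Finset.univ y hne
  set m := y j₀ with hm
  have hmneg : m < 0 := lt_of_le_of_lt (hj₀ j₁ (Finset.mem_univ _)) hj₁
  have hylb : ∀ k, m ≤ y k := fun k => hj₀ k (Finset.mem_univ _)
  -- entries of M
  have hMe : ∀ i j, M i j = (if i = j then (1:ℝ) else 0) - lam i * Wt i j := by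
    intro i j
    simp [hM, Matrix.one_apply, Matrix.diagonal_mul, Matrix.sub_apply, Matrix.mul_apply,
      Finset.mul_sum]
    rw [Finset.sum_eq_single i]
    · simp
    · intro b _ hb; simp [Matrix.diagonal_apply_ne' _ hb]
    · simp
  have hMv : ∀ i, (M *ᵥ y) i = y i - lam i * ∑ k, Wt i k * y k := by
    intro i
    simp only [Matrix.mulVec, dotProduct, hMe, sub_mul, ite_mul, one_mul, zero_mul,
      Finset.sum_sub_distrib, mul_assoc]
    rw [Finset.sum_ite_eq (Finset.univ) i (fun k => y k), ← Finset.mul_sum]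
    simp
  -- structure of the minimizing set
  have hstruct : ∀ i, y i = m → lam i = 1 ∧ ∀ k, Wt i k ≠ 0 → y k = m := by
    intro i hi
    have hw : m ≤ ∑ k, Wt i k * y k := by
      calc m = ∑ k, Wt i k * m := by rw [← Finset.sum_mul, hWt1 i, one_mul]
      _ ≤ ∑ k, Wt i k * y k :=
          Finset.sum_le_sum (fun k _ => mul_le_mul_of_nonneg_left (hylb k) (hWt0 i k))
    have hlamw : lam i * m ≤ lam i * ∑ k, Wt i k * y k :=
      mul_le_mul_of_nonneg_left hw (hlam i)
    have hmlam : m ≤ lam i * m := by nlinarith [hlam i, hlam1 i]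
    have hci := hc i
    rw [hMv i, hi] at hci
    -- m ≥ lam i * ∑ ... ≥ lam i * m ≥ m, all equalities
    have h1 : lam i * ∑ k, Wt i k * y k ≤ m := by linarith
    have h2 : lam i * m = m := le_antisymm (by linarith) hmlam
    have hlami : lam i = 1 :=
      mul_right_cancel₀ (ne_of_lt hmneg) (by linarith : lam i * m = 1 * m)
    have hweq : ∑ k, Wt i k * y k = m := by
      rw [hlami, one_mul] at h1; exact le_antisymm h1 hw
    refine ⟨hlami, ?_⟩
    -- ∑ Wt i k * (y k - m) = 0 with nonneg terms
    have hz : ∑ k, Wt i k * (y k - m) = 0 := by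
      simp only [mul_sub, Finset.sum_sub_distrib, hweq, ← Finset.sum_mul, hWt1 i, one_mul,
        sub_self]
    have hterm : ∀ k ∈ Finset.univ, Wt i k * (y k - m) = 0 := by
      rw [← Finset.sum_eq_zero_iff_of_nonneg]
      · exact hz
      · intro k _; exact mul_nonneg (hWt0 i k) (by linarith [hylb k])
    intro k hk
    have := hterm k (Finset.mem_univ k)
    rcases mul_eq_zero.mp this with h | h
    · exact absurd h hk
    · linarith [hylb k]
  -- now M is block triangular wrt p and the block on {y = m} is singular
  set p : Fin n → Prop := fun i => y i = m with hp
  have hblock : ∀ i, p i → ∀ j, ¬ p j → M i j = 0 := by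
    intro i hi j hj
    obtain ⟨hl, hcl⟩ := hstruct i hi
    have hWij : Wt i j = 0 := by
      by_contra h; exact hj (hcl j h)
    have hij : i ≠ j := fun h => hj (h ▸ hi)
    rw [hMe, if_neg hij, hWij, mul_zero, sub_zero]
  have hdet : M.det = 0 := by
    rw [Matrix.twoBlockTriangular_det' M p hblock]
    have : (Matrix.toSquareBlockProp M p).det = 0 := by
      rw [← Matrix.exists_mulVec_eq_zero_iff]
      refine ⟨fun _ => 1, ?_, ?_⟩
      · intro h
        have := congrFun h ⟨j₀, rfl⟩
        simp at this
      · funext i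
        obtain ⟨hl, hcl⟩ := hstruct i.1 i.2
        have hWrow : ∀ k, ¬ p k → Wt i.1 k = 0 := by
          intro k hk; by_contra h; exact hk (hcl k h)
        have hsum : ∑ k ∈ Finset.univ.filter p, Wt i.1 k = 1 := by
          rw [← hWt1 i.1]
          apply Finset.sum_subset (Finset.filter_subset _ _)
          intro k _ hk
          exact hWrow k (by simpa using hk)
        have : ∑ k ∈ Finset.univ.filter p, M i.1 k = 0 := by
          have hone : ∑ k ∈ Finset.univ.filter p, (if (i:Fin n) = k then (1:ℝ) else 0) = 1 := by
            rw [Finset.sum_ite_eq]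
            simpa using i.2
          simp only [hMe, hl, one_mul, Finset.sum_sub_distrib, hsum, hone]
          ring
        simp only [Matrix.mulVec, dotProduct, Matrix.toSquareBlockProp_def, mul_one,
          Pi.zero_apply]
        rw [← this]
        exact (Finset.sum_subtype (Finset.univ.filter p) (by simp) fun k => M i.1 k).symm
    rw [this, zero_mul]
  have := Matrix.isUnit_iff_isUnit_det M |>.mp hinv
  rw [hdet] at this
  exact (by simpa using this : False)

/-- the adoption-free equilibrium opinion vector
`x* = (I − ΛW̃)⁻¹ (I − Λ − Ξ) x⁰` lies in the unit cube. -/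
theorem adoption_free_opinion_in_unit_cube
    (n : ℕ) (hn : 1 ≤ n)
    (Wt : Matrix (Fin n) (Fin n) ℝ)
    (hWt0 : ∀ i j, 0 ≤ Wt i j) (hWt1 : ∀ i, ∑ j, Wt i j = 1)
    (lam ξ : Fin n → ℝ)
    (hlam : ∀ j, 0 ≤ lam j) (hξ : ∀ j, 0 ≤ ξ j)
    (hlamξ : ∀ j, lam j + ξ j ≤ 1)
    (x0 : Fin n → ℝ) (hx0 : ∀ j, x0 j ∈ Set.Icc (0 : ℝ) 1)
    (hinv : IsUnit (1 - Matrix.diagonal lam * Wt))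
    (heig : ∀ μ : ℂ,
        ((Matrix.diagonal lam * Wt).map (fun r : ℝ => (r : ℂ))).charpoly.IsRoot μ →
        ‖μ‖ < 1)
    (xstar : Fin n → ℝ)
    (hxstar : xstar =
        ((1 - Matrix.diagonal lam * Wt)⁻¹
          * (1 - Matrix.diagonal lam - Matrix.diagonal ξ)) *ᵥ x0) :
    ∀ j, 0 ≤ xstar j ∧ xstar j ≤ 1 := by
  classical
  set M : Matrix (Fin n) (Fin n) ℝ := 1 - Matrix.diagonal lam * Wt with hMdef
  have hdetM : IsUnit M.det := (Matrix.isUnit_iff_isUnit_det M).mp hinv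
  have hlam1 : ∀ j, lam j ≤ 1 := fun j => by linarith [hξ j, hlamξ j]
  -- M *ᵥ xstar = (1 - Λ - Ξ) *ᵥ x0
  have hMx : M *ᵥ xstar = (1 - Matrix.diagonal lam - Matrix.diagonal ξ) *ᵥ x0 := by
    rw [hxstar, Matrix.mulVec_mulVec, ← Matrix.mul_assoc,
      Matrix.mul_nonsing_inv M hdetM, Matrix.one_mul]
  have hdiag : (1 - Matrix.diagonal lam - Matrix.diagonal ξ : Matrix (Fin n) (Fin n) ℝ)
      = Matrix.diagonal (fun j => 1 - lam j - ξ j) := by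
    rw [← Matrix.diagonal_one, ← Matrix.diagonal_sub, ← Matrix.diagonal_sub]
  have hb : ∀ j, (M *ᵥ xstar) j = (1 - lam j - ξ j) * x0 j := by
    intro j
    rw [hMx, hdiag, Matrix.mulVec_diagonal]
  -- lower bound
  have h0 : ∀ j, 0 ≤ xstar j := by
    apply key_nonneg n Wt hWt0 hWt1 lam hlam hlam1 hinv
    intro j
    rw [← hMdef, hb j]
    have hj := hx0 j
    have := hlamξ j
    exact mul_nonneg (by linarith) hj.1
  -- upper bound via y = 1 - xstar
  have h1 : ∀ j, 0 ≤ 1 - xstar j := by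
    apply key_nonneg n Wt hWt0 hWt1 lam hlam hlam1 hinv
    intro j
    have hMone : (M *ᵥ (fun _ => (1:ℝ))) j = 1 - lam j := by
      simp only [hMdef, Matrix.sub_mulVec, Matrix.one_mulVec, ← Matrix.mulVec_mulVec,
        Pi.sub_apply]
      have : (Wt *ᵥ fun _ => (1:ℝ)) = fun _ => (1:ℝ) := by
        funext i
        simp [Matrix.mulVec, dotProduct, hWt1 i]
      rw [this, Matrix.mulVec_diagonal]
      ring_nf
    have hsub : (M *ᵥ (fun k => 1 - xstar k)) j
        = (M *ᵥ (fun _ => (1:ℝ))) j - (M *ᵥ xstar) j := by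
      have : (fun k => 1 - xstar k) = (fun _ => (1:ℝ)) - xstar := by
        funext k; simp
      rw [this, Matrix.mulVec_sub]
      simp
    rw [← hMdef, hsub, hMone, hb j]
    have hj := hx0 j
    have h2 := hlamξ j
    have h3 := hξ j
    nlinarith [hj.1, hj.2]
  intro j
  exact ⟨h0 j, by linarith [h1 j]⟩
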